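/- Let V be a commutative ring and I an idempotent ideal with Ĩ = I ⊗_V I flat, and A a commutative V-algebra. Then the canonical V-algebra map A_{!!} → A is an almost isomorphism: its kernel and cokernel are killed by I. -/

import Mathlib

open TensorProduct

noncomputable section

set_option maxSynthPendingDepth 5

variable {V : Type} [CommRing V]

/-- The multiplication map `Ĩ = I ⊗[V] I → V` induced by the inclusion. -/
def idealMul (I : Ideal V) : (↥I ⊗[V] ↥I) →ₗ[V] V :=
  TensorProduct.lift (((LinearMap.mul V V).comp I.subtype).compl₂ I.subtype)

variable (I : Ideal V) (A : Type) [CommRing A] [Algebra V A]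

/-- The map `Ĩ → Ĩ ⊗ A`, `x ↦ x ⊗ 1`, induced by the unit of `A`. -/
def unitTensor : (↥I ⊗[V] ↥I) →ₗ[V] ((↥I ⊗[V] ↥I) ⊗[V] A) :=
  (TensorProduct.mk V (↥I ⊗[V] ↥I) A).flip 1

/-- The structure map of the pushout `V ⊕_Ĩ (Ĩ ⊗ A)`. -/
def bangRel : (↥I ⊗[V] ↥I) →ₗ[V] (V × ((↥I ⊗[V] ↥I) ⊗[V] A)) :=
  (idealMul I).prod (-(unitTensor I A))

/-- `A_{!!} = V ⊕_Ĩ (Ĩ ⊗ A)`, the pushout of `V ← Ĩ → Ĩ ⊗ A` in `V`-modules. -/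
def Bang : Type :=
  (V × ((↥I ⊗[V] ↥I) ⊗[V] A)) ⧸ LinearMap.range (bangRel I A)

instance : AddCommGroup (Bang I A) := by unfold Bang; infer_instance
instance : Module V (Bang I A) := by unfold Bang; infer_instance

/-- The action map `Ĩ ⊗ A → A`. -/
def tildeAct : ((↥I ⊗[V] ↥I) ⊗[V] A) →ₗ[V] A :=
  TensorProduct.lift ((LinearMap.lsmul V A).comp (idealMul I))

/-- The canonical map `A_{!!} → A`. -/
def bangToA : Bang I A →ₗ[V] A :=
  Submodule.liftQ _ ((Algebra.linearMap V A).coprod (tildeAct I A)) (by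
    rintro y ⟨x, rfl⟩
    simp only [LinearMap.mem_ker, bangRel, unitTensor, LinearMap.prod_apply,
      LinearMap.coprod_apply, Function.prod, LinearMap.neg_apply, map_neg,
      LinearMap.flip_apply, TensorProduct.mk_apply, tildeAct,
      TensorProduct.lift.tmul, LinearMap.coe_comp, Function.comp_apply,
      LinearMap.lsmul_apply, Algebra.linearMap_apply,
      Algebra.algebraMap_eq_smul_one, smul_eq_mul, mul_one]
    ring)



lemma smulSplit (r s : V) (p q : ↥I) :
    (r * s) • (p ⊗ₜ[V] q) = (r • p) ⊗ₜ[V] (s • q) := by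
  rw [mul_smul, smul_tmul', tmul_smul, smul_tmul', smul_comm r s, ← smul_tmul']

lemma key1 (b c : ↥I) (s : ↥I ⊗[V] ↥I) :
    ((b : V) * (c : V)) • s = idealMul I s • (b ⊗ₜ[V] c) := by
  induction s using TensorProduct.induction_on with
  | zero => simp
  | tmul p q =>
      have e : idealMul I (p ⊗ₜ[V] q) = (p : V) * (q : V) := by
        simp [idealMul]
      rw [e, smulSplit, smulSplit]
      congr 1 <;> exact Subtype.ext (mul_comm _ _)
  | add x y hx hy => simp only [smul_add, map_add, add_smul, hx, hy]

lemma key2 (b c : ↥I) (t : (↥I ⊗[V] ↥I) ⊗[V] A) :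
    ((b : V) * (c : V)) • t = (b ⊗ₜ[V] c) ⊗ₜ[V] (tildeAct I A t) := by
  induction t using TensorProduct.induction_on with
  | zero => simp
  | tmul s x =>
      rw [smul_tmul', key1, smul_tmul]
      simp [tildeAct, TensorProduct.lift.tmul]
  | add x y hx hy => simp only [smul_add, map_add, tmul_add, hx, hy]

/-- the canonical map `A_{!!} → A` is an almost isomorphism: its
kernel and cokernel are killed by `I`. -/
theorem bang_to_A_almost_iso (hI : I * I = I)
    (hflat : Module.Flat V (↥I ⊗[V] ↥I)) :
    (∀ a ∈ I, ∀ x ∈ LinearMap.ker (bangToA I A), a • x = 0) ∧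
    (∀ a ∈ I, ∀ y : A ⧸ LinearMap.range (bangToA I A), a • y = 0) := by
  constructor
  · intro a ha x hx
    obtain ⟨p, rfl⟩ := Submodule.Quotient.mk_surjective _ x
    have hx' : algebraMap V A p.1 + tildeAct I A p.2 = 0 := hx
    have hact : tildeAct I A p.2 = -(algebraMap V A p.1) :=
      eq_neg_of_add_eq_zero_right hx' 
    have ha' : a ∈ I * I := hI.symm ▸ ha
    change a • (Submodule.Quotient.mk p : (V × ((↥I ⊗[V] ↥I) ⊗[V] A)) ⧸ LinearMap.range (bangRel I A)) = 0
    refine Submodule.mul_induction_on ha' (fun b hb c hc => ?_)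
      (fun u v hu hv => by rw [add_smul, hu, hv, add_zero])
    rw [← Submodule.Quotient.mk_smul, Submodule.Quotient.mk_eq_zero]
    refine ⟨p.1 • ((⟨b, hb⟩ : ↥I) ⊗ₜ[V] (⟨c, hc⟩ : ↥I)), ?_⟩
    have h2 : (b * c) • p.2 =
        ((⟨b, hb⟩ : ↥I) ⊗ₜ[V] (⟨c, hc⟩ : ↥I)) ⊗ₜ[V] (tildeAct I A p.2) :=
      key2 I A ⟨b, hb⟩ ⟨c, hc⟩ p.2
    apply Prod.ext
    · simp only [bangRel, LinearMap.prod_apply, Function.prod, map_smul, idealMul,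
        TensorProduct.lift.tmul, LinearMap.compl₂_apply, LinearMap.coe_comp,
        Function.comp_apply, Submodule.coe_subtype, LinearMap.mul_apply',
        Prod.smul_fst, smul_eq_mul]
      ring
    · simp only [bangRel, LinearMap.prod_apply, Function.prod, LinearMap.neg_apply,
        map_smul, unitTensor, LinearMap.flip_apply, TensorProduct.mk_apply,
        Prod.smul_snd]
      rw [h2, hact, smul_neg, ← tmul_smul, tmul_neg,
        Algebra.algebraMap_eq_smul_one]
  · intro a ha y
    obtain ⟨x, rfl⟩ := Submodule.Quotient.mk_surjective _ y
    rw [← Submodule.Quotient.mk_smul, Submodule.Quotient.mk_eq_zero]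
    have ha' : a ∈ I * I := hI.symm ▸ ha
    refine Submodule.mul_induction_on ha' (fun b hb c hc => ?_)
      (fun u v hu hv => by rw [add_smul]; exact Submodule.add_mem _ hu hv)
    refine ⟨Submodule.Quotient.mk ((0 : V),
      ((⟨b, hb⟩ : ↥I) ⊗ₜ[V] (⟨c, hc⟩ : ↥I)) ⊗ₜ[V] x), ?_⟩
    show algebraMap V A 0 +
      tildeAct I A (((⟨b, hb⟩ : ↥I) ⊗ₜ[V] (⟨c, hc⟩ : ↥I)) ⊗ₜ[V] x) = (b * c) • x
    rw [map_zero, zero_add]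
    simp only [tildeAct, TensorProduct.lift.tmul, LinearMap.coe_comp,
      Function.comp_apply, LinearMap.lsmul_apply, idealMul,
      LinearMap.compl₂_apply, Submodule.coe_subtype, LinearMap.mul_apply',
      smul_eq_mul]

end
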